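/- (Theorem 2) For all n ∈ ℕ with n ≥ 1 and all x_{1:n} ∈ 𝒳^n such that PTW_d(x_{1:n}) > 0 where d = ⌈log₂ n⌉, the depth-adaptive mixture satisfies −log₂ PTW(x_{1:n}) ≤ −log₂ PTW_d(x_{1:n}) + ⌈log₂ n⌉·(log₂ 3 − 1). -/

import Mathlib

/-- The set `𝒞_d(t)` of binary temporal partitions starting at `t`, represented as
finsets of segments `(a,b)` (each segment identified with the interval `{a,…,b}`). -/
def Cpt : ℕ → ℕ → Finset (Finset (ℕ × ℕ))
  | 0, t => {{(t, t)}}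
  | d + 1, t =>
      insert {(t, t + 2 ^ (d + 1) - 1)}
        ((Cpt d t ×ˢ Cpt d (t + 2 ^ d)).image fun p => p.1 ∪ p.2)

/-- `Γ_d(P)`: the number of nodes of depth less than `d` in the binary partition tree
associated with `P ∈ 𝒞_d(t)`, defined by the recursion `Γ_0(P) = 0`,
`Γ_{d+1}({(t, t+2^{d+1}-1)}) = 1` and `Γ_{d+1}(S₁ ∪ S₂) = Γ_d(S₁) + Γ_d(S₂) + 1`. -/
def Gam : ℕ → ℕ → Finset (ℕ × ℕ) → ℕ
  | 0, _, _ => 0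
  | d + 1, t, P =>
      if P = {(t, t + 2 ^ (d + 1) - 1)} then 1
      else Gam d t (P.filter fun s => s.2 < t + 2 ^ d)
            + Gam d (t + 2 ^ d) (P.filter fun s => t + 2 ^ d ≤ s.1) + 1

/-- The substring `x_{a:min(b,n)}` of the (1-based) sequence `x` of length `n`,
treated as a standalone string; it is the empty string when `a > min(b,n)`. -/
def seg {𝒳 : Type*} (x : ℕ → 𝒳) (n a b : ℕ) : List 𝒳 :=
  (List.range (min b n + 1 - a)).map fun i => x (a + i)

/-- `ρ` is a probabilistic data generating source: `ρ(ε) = 1`,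
`ρ(x_{1:n}) = ∑_{y ∈ 𝒳} ρ(x_{1:n} y)`, and all values lie in `[0,1]`. -/
def IsSource {𝒳 : Type*} [Fintype 𝒳] (ρ : List 𝒳 → ℝ) : Prop :=
  ρ [] = 1 ∧ (∀ l : List 𝒳, ρ l = ∑ y : 𝒳, ρ (l ++ [y])) ∧
    ∀ l : List 𝒳, ρ l ∈ Set.Icc (0 : ℝ) 1

/-- The Partition Tree Weighting mixture
`PTW_d(x_{1:n}) = ∑_{P ∈ 𝒞_d} 2^{-Γ_d(P)} ∏_{(a,b) ∈ P} ρ(x_{a:b})` (for `n ≤ 2^d`). -/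
noncomputable def PTW {𝒳 : Type*} (ρ : List 𝒳 → ℝ) (d : ℕ) (x : ℕ → 𝒳) (n : ℕ) : ℝ :=
  ∑ P ∈ Cpt d 1, (2 : ℝ) ^ (-(Gam d 1 P : ℤ)) * ∏ s ∈ P, ρ (seg x n s.1 s.2)

/-- The depth-adaptive PTW mixture
`PTW(x_{1:n}) := ∏_{i=1}^n PTW_{⌈log₂ i⌉}(x_{1:i}) / PTW_{⌈log₂ i⌉}(x_{1:i-1})`. -/
noncomputable def PTWad {𝒳 : Type*} (ρ : List 𝒳 → ℝ) (x : ℕ → 𝒳) (n : ℕ) : ℝ :=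
  ∏ i ∈ Finset.Icc 1 n,
    PTW ρ (Nat.clog 2 i) x i / PTW ρ (Nat.clog 2 i) x (i - 1)

lemma Cpt_bounds : ∀ d t, ∀ P ∈ Cpt d t, ∀ s ∈ P, t ≤ s.1 ∧ s.1 ≤ s.2 ∧ s.2 ≤ t + 2 ^ d - 1 := by
  intro d
  induction d with
  | zero =>
    intro t P hP s hs
    simp [Cpt] at hP
    subst hP
    simp at hs
    subst hs
    simp
  | succ d ih =>
    intro t P hP s hs
    have h1 : (1:ℕ) ≤ 2 ^ d := Nat.one_le_two_pow
    have h2 : (2:ℕ) ^ (d+1) = 2 ^ d + 2 ^ d := by ring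
    simp [Cpt] at hP
    rcases hP with rfl | ⟨P₁, P₂, ⟨h₁, h₂⟩, rfl⟩
    · simp at hs; subst hs; simp; omega
    · rcases Finset.mem_union.mp hs with h | h
      · have := ih t P₁ h₁ s h; omega
      · have := ih (t + 2 ^ d) P₂ h₂ s h; omega

lemma Cpt_nonempty : ∀ d t, ∀ P ∈ Cpt d t, P.Nonempty := by
  intro d
  induction d with
  | zero => intro t P hP; simp [Cpt] at hP; subst hP; simp
  | succ d ih =>
    intro t P hP
    simp [Cpt] at hP
    rcases hP with rfl | ⟨P₁, P₂, ⟨h₁, h₂⟩, rfl⟩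
    · simp
    · exact (ih t P₁ h₁).mono Finset.subset_union_left

lemma filter_left {d t : ℕ} {P₁ P₂ : Finset (ℕ × ℕ)} (h₁ : P₁ ∈ Cpt d t)
    (h₂ : P₂ ∈ Cpt d (t + 2 ^ d)) :
    (P₁ ∪ P₂).filter (fun s => s.2 < t + 2 ^ d) = P₁ := by
  have h1 : (1:ℕ) ≤ 2 ^ d := Nat.one_le_two_pow
  ext s
  simp only [Finset.mem_filter, Finset.mem_union]
  constructor
  · rintro ⟨h | h, hlt⟩
    · exact h
    · exfalso; have := Cpt_bounds d _ P₂ h₂ s h; omega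
  · intro h
    have := Cpt_bounds d _ P₁ h₁ s h
    exact ⟨Or.inl h, by omega⟩

lemma filter_right {d t : ℕ} {P₁ P₂ : Finset (ℕ × ℕ)} (h₁ : P₁ ∈ Cpt d t)
    (h₂ : P₂ ∈ Cpt d (t + 2 ^ d)) :
    (P₁ ∪ P₂).filter (fun s => t + 2 ^ d ≤ s.1) = P₂ := by
  have h1 : (1:ℕ) ≤ 2 ^ d := Nat.one_le_two_pow
  ext s
  simp only [Finset.mem_filter, Finset.mem_union]
  constructor
  · rintro ⟨h | h, hle⟩
    · exfalso; have := Cpt_bounds d _ P₁ h₁ s h; omega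
    · exact h
  · intro h
    have := Cpt_bounds d _ P₂ h₂ s h
    exact ⟨Or.inr h, by omega⟩

lemma Cpt_disjoint {d t : ℕ} {P₁ P₂ : Finset (ℕ × ℕ)} (h₁ : P₁ ∈ Cpt d t)
    (h₂ : P₂ ∈ Cpt d (t + 2 ^ d)) : Disjoint P₁ P₂ := by
  have h1 : (1:ℕ) ≤ 2 ^ d := Nat.one_le_two_pow
  rw [Finset.disjoint_left]
  intro s hs hs'
  have := Cpt_bounds d _ P₁ h₁ s hs
  have := Cpt_bounds d _ P₂ h₂ s hs'
  omega

lemma union_ne_single {d t : ℕ} {P₁ P₂ : Finset (ℕ × ℕ)} (h₁ : P₁ ∈ Cpt d t)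
    (h₂ : P₂ ∈ Cpt d (t + 2 ^ d)) :
    P₁ ∪ P₂ ≠ {(t, t + 2 ^ (d + 1) - 1)} := by
  have h1 : (1:ℕ) ≤ 2 ^ d := Nat.one_le_two_pow
  have h2 : (2:ℕ) ^ (d+1) = 2 ^ d + 2 ^ d := by ring
  intro h
  obtain ⟨s, hs⟩ := Cpt_nonempty d t P₁ h₁
  have hmem : s ∈ P₁ ∪ P₂ := Finset.mem_union_left _ hs
  rw [h, Finset.mem_singleton] at hmem
  have := Cpt_bounds d t P₁ h₁ s hs
  subst hmem
  simp at this
  omega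

lemma Gam_union {d t : ℕ} {P₁ P₂ : Finset (ℕ × ℕ)} (h₁ : P₁ ∈ Cpt d t)
    (h₂ : P₂ ∈ Cpt d (t + 2 ^ d)) :
    Gam (d + 1) t (P₁ ∪ P₂) = Gam d t P₁ + Gam d (t + 2 ^ d) P₂ + 1 := by
  rw [Gam, if_neg (union_ne_single h₁ h₂), filter_left h₁ h₂, filter_right h₁ h₂]

lemma sum_Cpt_succ (d t : ℕ) (F : Finset (ℕ × ℕ) → ℝ) :
    ∑ P ∈ Cpt (d + 1) t, (2:ℝ) ^ (-(Gam (d + 1) t P : ℤ)) * F P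
      = 2⁻¹ * F {(t, t + 2 ^ (d + 1) - 1)}
        + 2⁻¹ * ∑ P₁ ∈ Cpt d t, ∑ P₂ ∈ Cpt d (t + 2 ^ d),
            ((2:ℝ) ^ (-(Gam d t P₁ : ℤ)) * (2:ℝ) ^ (-(Gam d (t + 2 ^ d) P₂ : ℤ))) * F (P₁ ∪ P₂) := by
  rw [show Cpt (d+1) t = insert {(t, t + 2 ^ (d + 1) - 1)}
        ((Cpt d t ×ˢ Cpt d (t + 2 ^ d)).image fun p => p.1 ∪ p.2) from rfl]
  have hnotmem : ({(t, t + 2 ^ (d + 1) - 1)} : Finset (ℕ × ℕ)) ∉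
      (Cpt d t ×ˢ Cpt d (t + 2 ^ d)).image fun p => p.1 ∪ p.2 := by
    simp only [Finset.mem_image, Finset.mem_product, Prod.exists]
    rintro ⟨P₁, P₂, ⟨h₁, h₂⟩, h⟩
    exact union_ne_single h₁ h₂ h
  rw [Finset.sum_insert hnotmem]
  have hGs : Gam (d+1) t {(t, t + 2 ^ (d + 1) - 1)} = 1 := by rw [Gam, if_pos rfl]
  rw [hGs]
  have hinj : ∀ p ∈ Cpt d t ×ˢ Cpt d (t + 2 ^ d), ∀ q ∈ Cpt d t ×ˢ Cpt d (t + 2 ^ d),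
      (fun p : Finset (ℕ×ℕ) × Finset (ℕ×ℕ) => p.1 ∪ p.2) p
        = (fun p : Finset (ℕ×ℕ) × Finset (ℕ×ℕ) => p.1 ∪ p.2) q → p = q := by
    rintro ⟨P₁, P₂⟩ hP ⟨Q₁, Q₂⟩ hQ h
    simp only [Finset.mem_product] at hP hQ
    simp only at h
    have e1 : P₁ = Q₁ := by
      rw [← filter_left hP.1 hP.2, ← filter_left hQ.1 hQ.2, h]
    have e2 : P₂ = Q₂ := by
      rw [← filter_right hP.1 hP.2, ← filter_right hQ.1 hQ.2, h]
    simp [e1, e2]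
  rw [Finset.sum_image hinj]
  rw [Finset.sum_product]
  congr 1
  · norm_num
  · rw [Finset.mul_sum]
    refine Finset.sum_congr rfl fun P₁ h₁ => ?_
    rw [Finset.mul_sum]
    refine Finset.sum_congr rfl fun P₂ h₂ => ?_
    rw [Gam_union h₁ h₂]
    push_cast
    rw [neg_add, neg_add, zpow_add₀ (by norm_num : (2:ℝ) ≠ 0), zpow_add₀ (by norm_num : (2:ℝ) ≠ 0)]
    simp [zpow_neg]
    ring

lemma sum_weights (d t : ℕ) : ∑ P ∈ Cpt d t, (2:ℝ) ^ (-(Gam d t P : ℤ)) = 1 := by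
  induction d generalizing t with
  | zero => simp [Cpt, Gam]
  | succ d ih =>
    have := sum_Cpt_succ d t (fun _ => 1)
    simp only [mul_one] at this
    rw [this]
    rw [Finset.sum_congr rfl fun P₁ h₁ => (by rw [← Finset.mul_sum, ih (t + 2^d), mul_one] :
      ∑ P₂ ∈ Cpt d (t + 2 ^ d), (2:ℝ) ^ (-(Gam d t P₁ : ℤ)) * (2:ℝ) ^ (-(Gam d (t + 2^d) P₂ : ℤ))
        = (2:ℝ) ^ (-(Gam d t P₁ : ℤ)))]
    rw [ih t]
    norm_num

lemma seg'_take {𝒳 : Type*} {x : ℕ → 𝒳} {m n a b : ℕ} (h : m ≤ n) :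
    seg x m a b = (seg x n a b).take (min b m + 1 - a) := by
  unfold seg
  rw [← List.map_take, List.take_range]
  have : (min b m + 1 - a) ⊓ (min b n + 1 - a) = min b m + 1 - a := by
    omega
  rw [this]

lemma seg_empty {𝒳 : Type*} {x : ℕ → 𝒳} {n a b : ℕ} (h : n < a) : seg x n a b = [] := by
  unfold seg
  have : min b n + 1 - a = 0 := by omega
  simp [this]

lemma seg_of_le {𝒳 : Type*} {x : ℕ → 𝒳} {n a b b' : ℕ} (h : n ≤ b) (h' : n ≤ b') :
    seg x n a b = seg x n a b' := by
  unfold seg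
  congr 2
  omega

noncomputable def PTWt {𝒳 : Type*} (ρ : List 𝒳 → ℝ) (d t : ℕ) (x : ℕ → 𝒳) (n : ℕ) : ℝ :=
  ∑ P ∈ Cpt d t, (2 : ℝ) ^ (-(Gam d t P : ℤ)) * ∏ s ∈ P, ρ (seg x n s.1 s.2)

lemma PTW_eq_PTWt {𝒳 : Type*} (ρ : List 𝒳 → ℝ) (d : ℕ) (x : ℕ → 𝒳) (n : ℕ) :
    PTW ρ d x n = PTWt ρ d 1 x n := rfl

section Source
variable {𝒳 : Type*} [Fintype 𝒳] {ρ : List 𝒳 → ℝ}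
variable (hρ : IsSource ρ)
include hρ

lemma source_nonneg (l : List 𝒳) : 0 ≤ ρ l := (hρ.2.2 l).1

lemma source_append_le (l t : List 𝒳) : ρ (l ++ t) ≤ ρ l := by
  induction t using List.reverseRecOn with
  | nil => simp
  | append_singleton t y ih =>
    calc ρ (l ++ (t ++ [y])) = ρ ((l ++ t) ++ [y]) := by rw [List.append_assoc]
    _ ≤ ∑ z : 𝒳, ρ ((l ++ t) ++ [z]) :=
        Finset.single_le_sum (f := fun z => ρ ((l ++ t) ++ [z]))
          (fun z _ => source_nonneg hρ _) (Finset.mem_univ y)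
    _ = ρ (l ++ t) := (hρ.2.1 _).symm
    _ ≤ ρ l := ih

lemma source_take_le (l : List 𝒳) (k : ℕ) : ρ l ≤ ρ (l.take k) := by
  conv_lhs => rw [← List.take_append_drop k l]
  exact source_append_le hρ _ _

lemma seg_le (x : ℕ → 𝒳) {m n : ℕ} (h : m ≤ n) (a b : ℕ) :
    ρ (seg x n a b) ≤ ρ (seg x m a b) := by
  rw [seg'_take h]
  exact source_take_le hρ _ _

lemma PTWt_nonneg (d t : ℕ) (x : ℕ → 𝒳) (n : ℕ) : 0 ≤ PTWt ρ d t x n := by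
  refine Finset.sum_nonneg fun P _ => mul_nonneg (by positivity) ?_
  exact Finset.prod_nonneg fun s _ => source_nonneg hρ _

lemma PTWt_mono (d t : ℕ) (x : ℕ → 𝒳) {m n : ℕ} (h : m ≤ n) :
    PTWt ρ d t x n ≤ PTWt ρ d t x m := by
  refine Finset.sum_le_sum fun P _ => ?_
  refine mul_le_mul_of_nonneg_left ?_ (by positivity)
  exact Finset.prod_le_prod (fun s _ => source_nonneg hρ _) (fun s _ => seg_le hρ x h _ _)

lemma PTWt_of_gt {d t : ℕ} {x : ℕ → 𝒳} {n : ℕ} (h : n < t) : PTWt ρ d t x n = 1 := by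
  unfold PTWt
  have key : ∀ P ∈ Cpt d t, ∏ s ∈ P, ρ (seg x n s.1 s.2) = 1 := by
    intro P hP
    refine Finset.prod_eq_one fun s hs => ?_
    have := Cpt_bounds d t P hP s hs
    rw [seg_empty (show n < s.1 by omega)]
    exact hρ.1
  rw [Finset.sum_congr rfl fun P hP => by rw [key P hP, mul_one], sum_weights]

omit hρ in
lemma PTWt_succ (ρ : List 𝒳 → ℝ) (d t : ℕ) (x : ℕ → 𝒳) (n : ℕ) :
    PTWt ρ (d + 1) t x n = 2⁻¹ * ρ (seg x n t (t + 2 ^ (d + 1) - 1))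
      + 2⁻¹ * (PTWt ρ d t x n * PTWt ρ d (t + 2 ^ d) x n) := by
  unfold PTWt
  rw [sum_Cpt_succ d t (fun P => ∏ s ∈ P, ρ (seg x n s.1 s.2))]
  congr 1
  · simp
  rw [Finset.sum_mul_sum]
  congr 1
  refine Finset.sum_congr rfl fun P₁ h₁ => Finset.sum_congr rfl fun P₂ h₂ => ?_
  rw [Finset.prod_union (Cpt_disjoint h₁ h₂)]
  ring

end Source

section Bounds
variable {𝒳 : Type*} [Fintype 𝒳] {ρ : List 𝒳 → ℝ} (hρ : IsSource ρ)
include hρ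

lemma half_rho_le_PTW (d : ℕ) (x : ℕ → 𝒳) (n : ℕ) :
    2⁻¹ * ρ (seg x n 1 (1 + 2 ^ d - 1)) ≤ PTW ρ d x n := by
  cases d with
  | zero =>
    have h : PTW ρ 0 x n = ρ (seg x n 1 1) := by
      unfold PTW
      rw [show Cpt 0 1 = {{(1,1)}} from rfl, Finset.sum_singleton,
        show Gam 0 1 {(1,1)} = 0 from rfl]
      norm_num
    rw [h]
    have := source_nonneg hρ (seg x n 1 1)
    linarith
  | succ d =>
    have hmem : ({(1, 1 + 2 ^ (d+1) - 1)} : Finset (ℕ × ℕ)) ∈ Cpt (d+1) 1 :=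
      Finset.mem_insert_self _ _
    have hterm : (2:ℝ) ^ (-(Gam (d+1) 1 {(1, 1 + 2 ^ (d+1) - 1)} : ℤ))
        * ∏ s ∈ ({(1, 1 + 2 ^ (d+1) - 1)} : Finset (ℕ × ℕ)), ρ (seg x n s.1 s.2)
        = 2⁻¹ * ρ (seg x n 1 (1 + 2 ^ (d+1) - 1)) := by
      rw [show Gam (d+1) 1 {(1, 1 + 2 ^ (d+1) - 1)} = 1 from by rw [Gam, if_pos rfl]]
      norm_num
    calc 2⁻¹ * ρ (seg x n 1 (1 + 2 ^ (d+1) - 1)) 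
        = _ := hterm.symm
      _ ≤ PTW ρ (d+1) x n := by
          unfold PTW
          refine Finset.single_le_sum
            (f := fun P => (2:ℝ) ^ (-(Gam (d+1) 1 P : ℤ)) * ∏ s ∈ P, ρ (seg x n s.1 s.2))
            (fun P _ => mul_nonneg (by positivity) ?_) hmem
          exact Finset.prod_nonneg fun s _ => source_nonneg hρ _

lemma PTW_succ_eq {d : ℕ} {x : ℕ → 𝒳} {n : ℕ} (h : n ≤ 2 ^ d) :
    PTW ρ (d + 1) x n = 2⁻¹ * ρ (seg x n 1 (1 + 2 ^ d - 1)) + 2⁻¹ * PTW ρ d x n := by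
  have h1 : (1:ℕ) ≤ 2 ^ d := Nat.one_le_two_pow
  have h2 : (2:ℕ) ^ (d+1) = 2 ^ d + 2 ^ d := by ring
  rw [PTW_eq_PTWt, PTWt_succ, PTWt_of_gt hρ (show n < 1 + 2 ^ d by omega), mul_one,
    ← PTW_eq_PTWt, seg_of_le (show n ≤ 1 + 2 ^ (d+1) - 1 by omega) (show n ≤ 1 + 2 ^ d - 1 by omega)]

lemma PTW_upper {d : ℕ} {x : ℕ → 𝒳} {n : ℕ} (h : n ≤ 2 ^ d) :
    PTW ρ (d + 1) x n ≤ (3/2) * PTW ρ d x n := by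
  rw [PTW_succ_eq hρ h]
  have := half_rho_le_PTW hρ d x n
  linarith

lemma PTW_lower {d : ℕ} {x : ℕ → 𝒳} {n : ℕ} (h : n ≤ 2 ^ d) :
    2⁻¹ * PTW ρ d x n ≤ PTW ρ (d + 1) x n := by
  rw [PTW_succ_eq hρ h]
  have := source_nonneg hρ (seg x n 1 (1 + 2 ^ d - 1))
  linarith

lemma PTW_mono {d : ℕ} (x : ℕ → 𝒳) {m n : ℕ} (h : m ≤ n) :
    PTW ρ d x n ≤ PTW ρ d x m := by
  rw [PTW_eq_PTWt, PTW_eq_PTWt]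
  exact PTWt_mono hρ d 1 x h

lemma PTWad_ge (x : ℕ → 𝒳) : ∀ n, 1 ≤ n → 0 < PTW ρ (Nat.clog 2 n) x n →
    (2/3 : ℝ) ^ (Nat.clog 2 n) * PTW ρ (Nat.clog 2 n) x n ≤ PTWad ρ x n := by
  intro n
  induction n with
  | zero => omega
  | succ n ihn =>
    intro _ hpos
    rcases Nat.eq_zero_or_pos n with rfl | hn1
    · have h1 : PTWad ρ x 1 = PTW ρ 0 x 1 / PTW ρ 0 x 0 := by
        simp [PTWad, Nat.clog_one_right]
      have h0 : PTW ρ 0 x 0 = 1 := by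
        rw [PTW_eq_PTWt]; exact PTWt_of_gt hρ (by norm_num)
      rw [Nat.clog_one_right] at hpos ⊢
      rw [h1, h0, pow_zero, one_mul, div_one]
    · set D := Nat.clog 2 (n+1) with hDdef
      have hD1 : 1 ≤ D := Nat.clog_pos one_lt_two (by omega)
      have hub : n + 1 ≤ 2 ^ D := Nat.le_pow_clog one_lt_two _
      have hlb : 2 ^ (D-1) < n + 1 := by
        by_contra hcon
        push_neg at hcon
        have := Nat.clog_mono_right 2 hcon
        rw [Nat.clog_pow 2 (D-1) one_lt_two] at this
        omega
      have hsplit : PTWad ρ x (n+1) = PTWad ρ x n * (PTW ρ D x (n+1) / PTW ρ D x n) := by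
        unfold PTWad
        rw [Finset.prod_Icc_succ_top (by omega : 1 ≤ n + 1)]
        norm_num
        exact Or.inl rfl
      have hposn : 0 < PTW ρ D x n := lt_of_lt_of_le hpos (PTW_mono hρ x (by omega))
      have hrnonneg : 0 ≤ PTW ρ D x (n+1) / PTW ρ D x n := by
        refine div_nonneg ?_ hposn.le
        rw [PTW_eq_PTWt]; exact PTWt_nonneg hρ _ _ _ _
      rcases eq_or_lt_of_le (show 2 ^ (D-1) ≤ n by omega) with heq | hgt
      · -- boundary case n = 2^(D-1)
        have hclogn : Nat.clog 2 n = D - 1 := by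
          rw [← heq, Nat.clog_pow 2 (D-1) one_lt_two]
        have hDD : D = (D-1) + 1 := by omega
        have hle2 : n ≤ 2 ^ (D-1) := le_of_eq heq.symm
        have hup : PTW ρ D x n ≤ (3/2) * PTW ρ (D-1) x n := by
          rw [hDD]; exact PTW_upper hρ hle2
        have hposn' : 0 < PTW ρ (D-1) x n := by linarith
        have hp : 0 < PTW ρ (Nat.clog 2 n) x n := by rw [hclogn]; exact hposn'
        have ih := ihn (by omega) hp
        rw [hclogn] at ih
        rw [hsplit]
        have c23 : (0:ℝ) ≤ (2/3:ℝ) ^ (D-1) := by positivity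
        have h1 : (2/3:ℝ) ^ D * PTW ρ D x n ≤ (2/3) ^ (D-1) * PTW ρ (D-1) x n := by
          rw [show (2/3:ℝ) ^ D = (2/3) ^ (D-1) * (2/3) from by rw [← pow_succ, ← hDD]]
          have : (2/3:ℝ) * PTW ρ D x n ≤ PTW ρ (D-1) x n := by linarith
          calc (2/3:ℝ) ^ (D-1) * (2/3) * PTW ρ D x n
              = (2/3:ℝ) ^ (D-1) * ((2/3) * PTW ρ D x n) := by ring
            _ ≤ (2/3:ℝ) ^ (D-1) * PTW ρ (D-1) x n := by
                exact mul_le_mul_of_nonneg_left this c23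
        calc (2/3:ℝ) ^ D * PTW ρ D x (n+1)
            = ((2/3:ℝ) ^ D * PTW ρ D x n) * (PTW ρ D x (n+1) / PTW ρ D x n) := by
              field_simp
          _ ≤ ((2/3:ℝ) ^ (D-1) * PTW ρ (D-1) x n) * (PTW ρ D x (n+1) / PTW ρ D x n) :=
              mul_le_mul_of_nonneg_right h1 hrnonneg
          _ ≤ PTWad ρ x n * (PTW ρ D x (n+1) / PTW ρ D x n) :=
              mul_le_mul_of_nonneg_right ih hrnonneg
      · -- interior case 2^(D-1) < n
        have hclogn : Nat.clog 2 n = D := by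
          have hge : D ≤ Nat.clog 2 n := by
            have := (Nat.lt_clog_iff_pow_lt one_lt_two).mpr hgt
            omega
          have hle : Nat.clog 2 n ≤ D := Nat.clog_mono_right 2 (by omega)
          omega
        have hp : 0 < PTW ρ (Nat.clog 2 n) x n := by rw [hclogn]; exact hposn
        have ih := ihn (by omega) hp
        rw [hclogn] at ih
        rw [hsplit]
        calc (2/3:ℝ) ^ D * PTW ρ D x (n+1)
            = ((2/3:ℝ) ^ D * PTW ρ D x n) * (PTW ρ D x (n+1) / PTW ρ D x n) := by
              field_simp
          _ ≤ PTWad ρ x n * (PTW ρ D x (n+1) / PTW ρ D x n) :=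
              mul_le_mul_of_nonneg_right ih hrnonneg

end Bounds


/-- **Theorem 2.** For all `n ≥ 1` and all `x_{1:n} ∈ 𝒳ⁿ` such that
`PTW_d(x_{1:n}) > 0` where `d = ⌈log₂ n⌉`, the depth-adaptive mixture satisfies
`-log₂ PTW(x_{1:n}) ≤ -log₂ PTW_d(x_{1:n}) + ⌈log₂ n⌉·(log₂ 3 - 1)`. -/
theorem ptw_strongly_online {𝒳 : Type*} [Fintype 𝒳] [Nonempty 𝒳]
    (ρ : List 𝒳 → ℝ) (hρ : IsSource ρ)
    (n : ℕ) (hn : 1 ≤ n) (x : ℕ → 𝒳)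
    (hpos : 0 < PTW ρ (Nat.clog 2 n) x n) :
    -Real.logb 2 (PTWad ρ x n) ≤
      -Real.logb 2 (PTW ρ (Nat.clog 2 n) x n)
        + (Nat.clog 2 n : ℝ) * (Real.logb 2 3 - 1) := by
  set D := Nat.clog 2 n with hD
  set f := PTW ρ D x n with hf
  have hge := PTWad_ge hρ x n hn hpos
  have hcpos : (0:ℝ) < (2/3:ℝ) ^ D * f := by positivity
  have hadpos : 0 < PTWad ρ x n := lt_of_lt_of_le hcpos hge
  have hlog : Real.logb 2 ((2/3:ℝ) ^ D * f) ≤ Real.logb 2 (PTWad ρ x n) :=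
    (Real.logb_le_logb one_lt_two hcpos hadpos).mpr hge
  have hexp : Real.logb 2 ((2/3:ℝ) ^ D * f)
      = (D:ℝ) * (1 - Real.logb 2 3) + Real.logb 2 f := by
    rw [Real.logb_mul (by positivity) hpos.ne', Real.logb_pow,
      Real.logb_div (by norm_num) (by norm_num),
      Real.logb_self_eq_one one_lt_two]
  rw [hexp] at hlog
  linarith
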